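/- For the Dunkl-Appell Gamma-type operator, D_n*(t²; x) = x² + (x/n)·[2μ·(e_μ(−nx)/e_μ(nx))·(A(−1)/A(1)) + 2A'(1)/A(1) + 2λ + 4] + (2μ/n²)·(e_μ(−nx)/e_μ(nx))·(A'(1)+A'(−1))/A(1) + (2μ²/n²)·(A(1)−A(−1))/A(1) + (μ(2λ+3)/n²)·(e_μ(−nx)/e_μ(nx))·(A(1)−A(−1))/A(1) + (1/n²)·[A''(1)/A(1) + (2λ+4)A'(1)/A(1) + (λ+1)(λ+2)]. -/

import Mathlib

open scoped BigOperators
open MeasureTheory Filter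

/-- Parity indicator: 0 for even, 1 for odd. -/
def theta (j : ℕ) : ℝ := if j % 2 = 1 then 1 else 0

/-- Dunkl coefficients via the recursion. -/
noncomputable def gamRec (μ : ℝ) : ℕ → ℝ
  | 0 => 1
  | k + 1 => ((k : ℝ) + 1 + 2 * μ * theta (k + 1)) * gamRec μ k

/-- Dunkl exponential. -/
noncomputable def emu (μ : ℝ) (x : ℝ) : ℝ := ∑' k : ℕ, x ^ k / gamRec μ k

/-- Dunkl-Appell polynomials. -/
noncomputable def pk (μ : ℝ) (a : ℕ → ℝ) (k : ℕ) (x : ℝ) : ℝ :=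
  ∑ j ∈ Finset.range (k + 1),
    (gamRec μ k / (gamRec μ j * gamRec μ (k - j))) * a (k - j) * x ^ j

/-- The analytic function A. -/
noncomputable def Afun (μ : ℝ) (a : ℕ → ℝ) (t : ℝ) : ℝ := ∑' r : ℕ, a r * t ^ r / gamRec μ r

/-- Dunkl-Appell Gamma-type (Szász–Durrmeyer) operator. -/
noncomputable def Dop (μ lam : ℝ) (a : ℕ → ℝ) (n : ℕ) (f : ℝ → ℝ) (x : ℝ) : ℝ :=
  (1 / (emu μ (n * x) * Afun μ a 1)) *
    ∑' k : ℕ, (pk μ a k (n * x) / gamRec μ k) *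
      ((n : ℝ) ^ ((k : ℝ) + 2 * μ * theta k + lam + 1) /
        Real.Gamma ((k : ℝ) + 2 * μ * theta k + lam + 1)) *
      ∫ t in Set.Ioi (0 : ℝ), Real.exp (-(n : ℝ) * t) * t ^ ((k : ℝ) + 2 * μ * theta k + lam) * f t

/-- Analyticity (radius of convergence > 1) hypothesis for A. -/
def AnalyticHyp (μ : ℝ) (a : ℕ → ℝ) : Prop :=
  ∃ R > (1 : ℝ), ∀ t : ℝ, |t| < R → Summable (fun r : ℕ => a r * t ^ r / gamRec μ r)

/-- Modulus of continuity on [0,∞). -/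
noncomputable def modCont (f : ℝ → ℝ) (δ : ℝ) : ℝ :=
  sSup {d : ℝ | ∃ x y : ℝ, 0 ≤ x ∧ 0 ≤ y ∧ |x - y| ≤ δ ∧ d = |f x - f y|}

/-- sup norm on [0,∞). -/
noncomputable def CBnorm (g : ℝ → ℝ) : ℝ := sSup ((fun x => |g x|) '' Set.Ici 0)

/-- Dunkl coefficients via the Gamma-function formulas of the paper. -/
noncomputable def gamG (μ : ℝ) (m : ℕ) : ℝ :=
  if m % 2 = 0 then
    2 ^ m * (Nat.factorial (m / 2)) * Real.Gamma ((m / 2 : ℕ) + μ + 1 / 2) / Real.Gamma (μ + 1 / 2)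
  else
    2 ^ m * (Nat.factorial ((m - 1) / 2)) * Real.Gamma (((m - 1) / 2 : ℕ) + μ + 3 / 2) / Real.Gamma (μ + 1 / 2)


lemma theta_eq (j : ℕ) : theta j = 0 ∨ theta j = 1 := by
  unfold theta; split <;> simp

lemma theta_nonneg (j : ℕ) : 0 ≤ theta j := by rcases theta_eq j with h | h <;> simp [h]

lemma theta_le_one (j : ℕ) : theta j ≤ 1 := by rcases theta_eq j with h | h <;> simp [h]

lemma theta_succ (m : ℕ) : theta (m + 1) = 1 - theta m := by
  unfold theta
  rcases Nat.mod_two_eq_zero_or_one m with h | h <;> simp [Nat.add_mod, h]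

lemma theta_add (j r : ℕ) :
    theta (j + r) = theta j + theta r - 2 * theta j * theta r := by
  unfold theta
  rcases Nat.mod_two_eq_zero_or_one j with h | h <;>
    rcases Nat.mod_two_eq_zero_or_one r with h' | h' <;>
      simp [Nat.add_mod, h, h'] <;> norm_num

lemma gam_succ (μ : ℝ) (k : ℕ) :
    gamRec μ (k + 1) = ((k : ℝ) + 1 + 2 * μ * theta (k + 1)) * gamRec μ k := rfl

lemma gam_pos {μ : ℝ} (hμ : 0 ≤ μ) (k : ℕ) : 0 < gamRec μ k := by
  induction k with
  | zero => norm_num [gamRec]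
  | succ m ih =>
      rw [gam_succ]
      have h1 : 0 ≤ 2 * μ * theta (m + 1) := by
        have := theta_nonneg (m + 1); positivity
      have : (0:ℝ) < (m : ℝ) + 1 + 2 * μ * theta (m + 1) := by positivity
      exact mul_pos this ih

lemma factorial_le_gam {μ : ℝ} (hμ : 0 ≤ μ) (k : ℕ) :
    (k.factorial : ℝ) ≤ gamRec μ k := by
  induction k with
  | zero => norm_num [gamRec]
  | succ m ih =>
      rw [gam_succ]
      have h1 : 0 ≤ 2 * μ * theta (m + 1) := by
        have := theta_nonneg (m + 1); positivity
      have h2 : ((m + 1).factorial : ℝ) = ((m:ℝ) + 1) * m.factorial := by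
        rw [Nat.factorial_succ]; push_cast; ring
      rw [h2]
      have hg := gam_pos hμ m
      have hf : (0:ℝ) ≤ (m.factorial : ℝ) := by positivity
      nlinarith [theta_nonneg (m+1)]

lemma sq_add_one_le (j : ℕ) : ((j : ℝ) + 1) ^ 2 ≤ 4 * 4 ^ j := by
  have h : (j : ℝ) + 1 ≤ 2 ^ j := by
    have := (Nat.lt_two_pow_self : j < 2 ^ j)
    have h2 : j + 1 ≤ 2 ^ j := this
    exact_mod_cast h2
  have h0 : (0:ℝ) ≤ (j:ℝ) + 1 := by positivity
  have h4 : ((2:ℝ) ^ j) ^ 2 = 4 ^ j := by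
    rw [← pow_mul, pow_mul']; norm_num
  nlinarith [pow_pos (show (0:ℝ) < 4 by norm_num) j]

lemma e_master {μ : ℝ} (hμ : 0 ≤ μ) {t : ℝ} (ht : 0 ≤ t) :
    Summable (fun j : ℕ => ((j : ℝ) + 1) ^ 2 * (t ^ j / gamRec μ j)) := by
  refine Summable.of_nonneg_of_le (fun j => by have := gam_pos hμ j; positivity)
    (fun j => ?_) ((Real.summable_pow_div_factorial (4 * t)).mul_left 4)
  have hg := gam_pos hμ j
  have hf := factorial_le_gam hμ j
  have hfp : (0:ℝ) < j.factorial := by positivity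
  have h1 : ((j:ℝ)+1)^2 * (t ^ j / gamRec μ j) ≤ ((j:ℝ)+1)^2 * (t ^ j / j.factorial) := by
    have : t ^ j / gamRec μ j ≤ t ^ j / j.factorial := by
      apply div_le_div_of_nonneg_left (by positivity) hfp hf
    nlinarith [sq_nonneg ((j:ℝ)+1), pow_nonneg ht j]
  refine h1.trans ?_
  have h2 : ((j:ℝ)+1)^2 * t ^ j ≤ 4 * (4*t) ^ j := by
    rw [mul_pow]
    have := sq_add_one_le j
    have h3 : (0:ℝ) ≤ t ^ j := by positivity
    nlinarith [pow_nonneg (show (0:ℝ) ≤ 4 by norm_num) j]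
  calc ((j:ℝ)+1)^2 * (t ^ j / j.factorial) = ((j:ℝ)+1)^2 * t ^ j / j.factorial := by ring
    _ ≤ 4 * (4*t)^j / j.factorial := by apply div_le_div_of_nonneg_right h2 hfp.le
    _ = 4 * ((4*t)^j / j.factorial) := by ring

lemma e_w {μ : ℝ} (hμ : 0 ≤ μ) {t : ℝ} (ht : 0 ≤ t) {C : ℝ} (hC : 0 ≤ C) (w : ℕ → ℝ)
    (hw : ∀ j, |w j| ≤ C * ((j : ℝ) + 1) ^ 2) :
    Summable (fun j : ℕ => |w j * (t ^ j / gamRec μ j)|) := by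
  refine Summable.of_nonneg_of_le (fun j => abs_nonneg _) (fun j => ?_)
    ((e_master hμ ht).mul_left C)
  have hg := gam_pos hμ j
  have h0 : (0:ℝ) ≤ t ^ j / gamRec μ j := by positivity
  rw [abs_mul, abs_of_nonneg h0]
  calc |w j| * (t ^ j / gamRec μ j) ≤ (C * ((j:ℝ)+1)^2) * (t ^ j / gamRec μ j) := by
        apply mul_le_mul_of_nonneg_right (hw j) h0
    _ = C * (((j:ℝ)+1)^2 * (t ^ j / gamRec μ j)) := by ring

lemma e_w' {μ : ℝ} (hμ : 0 ≤ μ) {t : ℝ} (ht : 0 ≤ t) {C : ℝ} (hC : 0 ≤ C) (w : ℕ → ℝ)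
    (hw : ∀ j, |w j| ≤ C * ((j : ℝ) + 1) ^ 2) :
    Summable (fun j : ℕ => w j * (t ^ j / gamRec μ j)) :=
  (e_w hμ ht hC w hw).of_abs

lemma A_master {μ : ℝ} {a : ℕ → ℝ} (hμ : 0 ≤ μ) (hA : AnalyticHyp μ a) :
    ∃ t₀ > (1:ℝ), Summable (fun r : ℕ => ((r : ℝ) + 1) ^ 2 * t₀ ^ r * (|a r| / gamRec μ r)) := by
  obtain ⟨R, hR, hs⟩ := hA
  set t₁ : ℝ := (1 + R) / 2 with ht₁def
  have ht₁ : 1 < t₁ := by simp only [ht₁def]; linarith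
  have ht₁R : t₁ < R := by simp only [ht₁def]; linarith
  have ht₁0 : (0:ℝ) < t₁ := by linarith
  have hsum1 : Summable (fun r : ℕ => |a r| * t₁ ^ r / gamRec μ r) := by
    have := (hs t₁ (by rw [abs_of_pos ht₁0]; exact ht₁R)).abs
    refine this.congr fun r => ?_
    have hg := gam_pos hμ r
    rw [abs_div, abs_mul, abs_of_pos hg, abs_of_pos (pow_pos ht₁0 r)]
  set M : ℝ := ∑' r : ℕ, |a r| * t₁ ^ r / gamRec μ r with hMdef
  have hbound : ∀ r : ℕ, |a r| * t₁ ^ r / gamRec μ r ≤ M := by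
    intro r
    exact Summable.le_tsum hsum1 r fun j _ => by have := gam_pos hμ j; positivity
  set t₀ : ℝ := (1 + t₁) / 2 with ht₀def
  have ht₀ : 1 < t₀ := by simp only [ht₀def]; linarith
  have ht₀t₁ : t₀ < t₁ := by simp only [ht₀def]; linarith
  have ht₀0 : (0:ℝ) < t₀ := by linarith
  refine ⟨t₀, ht₀, ?_⟩
  set q : ℝ := t₀ / t₁ with hqdef
  have hq0 : 0 < q := div_pos ht₀0 ht₁0
  have hq1 : q < 1 := (div_lt_one ht₁0).mpr ht₀t₁
  have hqs : Summable (fun r : ℕ => M * (((r:ℝ) + 1) ^ 2 * q ^ r)) := by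
    apply Summable.mul_left
    have h2 : Summable (fun r : ℕ => (r:ℝ) ^ 2 * q ^ r) := by
      have := summable_pow_mul_geometric_of_norm_lt_one (R := ℝ) 2
        (r := q) (by rw [Real.norm_eq_abs, abs_of_pos hq0]; exact hq1)
      exact this
    have h1 : Summable (fun r : ℕ => (r:ℝ) ^ 1 * q ^ r) := by
      have := summable_pow_mul_geometric_of_norm_lt_one (R := ℝ) 1
        (r := q) (by rw [Real.norm_eq_abs, abs_of_pos hq0]; exact hq1)
      exact this
    have h0 : Summable (fun r : ℕ => q ^ r) := summable_geometric_of_lt_one hq0.le hq1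
    have := (h2.add ((h1.mul_left 2).add h0))
    refine this.congr fun r => ?_
    ring
  refine Summable.of_nonneg_of_le (fun r => by have := gam_pos hμ r; positivity)
    (fun r => ?_) hqs
  have hg := gam_pos hμ r
  have key : t₀ ^ r = q ^ r * t₁ ^ r := by
    rw [← mul_pow, hqdef, div_mul_cancel₀]; exact ne_of_gt ht₁0
  calc ((r:ℝ)+1)^2 * t₀ ^ r * (|a r| / gamRec μ r)
      = ((r:ℝ)+1)^2 * q ^ r * (|a r| * t₁ ^ r / gamRec μ r) := by rw [key]; ring
    _ ≤ ((r:ℝ)+1)^2 * q ^ r * M := by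
        apply mul_le_mul_of_nonneg_left (hbound r) (by positivity)
    _ = M * (((r:ℝ)+1)^2 * q ^ r) := by ring

lemma A_w {μ : ℝ} {a : ℕ → ℝ} (hμ : 0 ≤ μ) (hA : AnalyticHyp μ a) {C : ℝ} (hC : 0 ≤ C)
    (w : ℕ → ℝ) (hw : ∀ r, |w r| ≤ C * ((r : ℝ) + 1) ^ 2) :
    Summable (fun r : ℕ => |w r * (a r / gamRec μ r)|) := by
  obtain ⟨t₀, ht₀, hM⟩ := A_master hμ hA
  refine Summable.of_nonneg_of_le (fun r => abs_nonneg _) (fun r => ?_) (hM.mul_left C)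
  have hg := gam_pos hμ r
  have h1 : (1:ℝ) ≤ t₀ ^ r := one_le_pow₀ (by linarith : (1:ℝ) ≤ t₀)
  rw [abs_mul, abs_div, abs_of_pos hg]
  calc |w r| * (|a r| / gamRec μ r) ≤ (C * ((r:ℝ)+1)^2) * (|a r| / gamRec μ r) :=
        mul_le_mul_of_nonneg_right (hw r) (by positivity)
    _ ≤ (C * ((r:ℝ)+1)^2) * (t₀ ^ r * (|a r| / gamRec μ r)) := by
        have h2 : |a r| / gamRec μ r ≤ t₀ ^ r * (|a r| / gamRec μ r) := by
          nlinarith [abs_nonneg (a r), div_nonneg (abs_nonneg (a r)) hg.le]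
        exact mul_le_mul_of_nonneg_left h2 (by positivity)
    _ = C * (((r:ℝ)+1)^2 * t₀ ^ r * (|a r| / gamRec μ r)) := by ring

lemma A_w' {μ : ℝ} {a : ℕ → ℝ} (hμ : 0 ≤ μ) (hA : AnalyticHyp μ a) {C : ℝ} (hC : 0 ≤ C)
    (w : ℕ → ℝ) (hw : ∀ r, |w r| ≤ C * ((r : ℝ) + 1) ^ 2) :
    Summable (fun r : ℕ => w r * (a r / gamRec μ r)) :=
  (A_w hμ hA hC w hw).of_abs

lemma afun_derivs {μ : ℝ} {a : ℕ → ℝ} (hμ : 0 ≤ μ) (hA : AnalyticHyp μ a) :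
    deriv (Afun μ a) 1 = (∑' r : ℕ, (r : ℝ) * (a r / gamRec μ r)) ∧
    deriv (Afun μ a) (-1) = (∑' r : ℕ, ((r : ℝ) * (-1 : ℝ) ^ (r - 1)) * (a r / gamRec μ r)) ∧
    deriv (deriv (Afun μ a)) 1 = (∑' r : ℕ, ((r : ℝ) * ((r : ℝ) - 1)) * (a r / gamRec μ r)) := by
  obtain ⟨t₀, ht₀, hM⟩ := A_master hμ hA
  set s : Set ℝ := Set.Ioo (-t₀) t₀ with hsdef
  have hso : IsOpen s := isOpen_Ioo
  have hsc : IsPreconnected s := isPreconnected_Ioo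
  have h1s : (1:ℝ) ∈ s := ⟨by linarith, ht₀⟩
  have hm1s : (-1:ℝ) ∈ s := ⟨by linarith, by linarith⟩
  set g' : ℕ → ℝ → ℝ := fun r t => a r * ((r : ℝ) * t ^ (r - 1)) / gamRec μ r with hg'def
  set g'' : ℕ → ℝ → ℝ :=
    fun r t => a r * ((r : ℝ) * (((r-1 : ℕ) : ℝ) * t ^ (r - 1 - 1))) / gamRec μ r with hg''def
  have hg : ∀ (r : ℕ) (t : ℝ), HasDerivAt (fun z => a r * z ^ r / gamRec μ r) (g' r t) t :=
    fun r t => ((hasDerivAt_pow r t).const_mul (a r)).div_const _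
  have hgg : ∀ (r : ℕ) (t : ℝ), HasDerivAt (g' r) (g'' r t) t := by
    intro r t
    exact (((hasDerivAt_pow (r-1) t).const_mul ((r:ℝ))).const_mul (a r)).div_const _
  have hb' : ∀ (r : ℕ) (z : ℝ), z ∈ s →
      ‖g' r z‖ ≤ ((r : ℝ) + 1) ^ 2 * t₀ ^ r * (|a r| / gamRec μ r) := by
    intro r z hz
    have hg0 := gam_pos hμ r
    have hzb : |z| ≤ t₀ := by
      rw [abs_le]; exact ⟨hz.1.le, hz.2.le⟩
    have hzp : |z| ^ (r-1) ≤ t₀ ^ r := by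
      calc |z| ^ (r-1) ≤ t₀ ^ (r-1) := pow_le_pow_left₀ (abs_nonneg z) hzb _
        _ ≤ t₀ ^ r := pow_le_pow_right₀ (by linarith) (Nat.sub_le r 1)
    have : ‖g' r z‖ = ((r:ℝ) * |z| ^ (r-1)) * (|a r| / gamRec μ r) := by
      rw [hg'def]
      simp only [Real.norm_eq_abs, abs_div, abs_mul, abs_of_pos hg0, abs_pow,
        Nat.abs_cast]
      ring
    rw [this]
    have hleft : (r:ℝ) * |z| ^ (r-1) ≤ ((r:ℝ)+1)^2 * t₀ ^ r := by
      have h1 : (r:ℝ) ≤ ((r:ℝ)+1)^2 := by nlinarith [Nat.cast_nonneg (α := ℝ) r]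
      exact mul_le_mul h1 hzp (by positivity) (by positivity)
    exact mul_le_mul hleft le_rfl (by positivity) (by positivity)
  have hb'' : ∀ (r : ℕ) (z : ℝ), z ∈ s →
      ‖g'' r z‖ ≤ ((r : ℝ) + 1) ^ 2 * t₀ ^ r * (|a r| / gamRec μ r) := by
    intro r z hz
    have hg0 := gam_pos hμ r
    have hzb : |z| ≤ t₀ := by rw [abs_le]; exact ⟨hz.1.le, hz.2.le⟩
    have hzp : |z| ^ (r-1-1) ≤ t₀ ^ r := by
      calc |z| ^ (r-1-1) ≤ t₀ ^ (r-1-1) := pow_le_pow_left₀ (abs_nonneg z) hzb _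
        _ ≤ t₀ ^ r := pow_le_pow_right₀ (by linarith) (le_trans (Nat.sub_le _ 1) (Nat.sub_le r 1))
    have : ‖g'' r z‖ = ((r:ℝ) * (((r-1:ℕ):ℝ) * |z| ^ (r-1-1))) * (|a r| / gamRec μ r) := by
      rw [hg''def]
      simp only [Real.norm_eq_abs, abs_div, abs_mul, abs_of_pos hg0, abs_pow, Nat.abs_cast]
      ring
    rw [this]
    refine mul_le_mul ?_ le_rfl (by positivity) (by positivity)
    have hr1 : ((r-1:ℕ):ℝ) ≤ (r:ℝ) + 1 := by
      have : (r-1:ℕ) ≤ r + 1 := by omega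
      exact_mod_cast this
    have hrr : (r:ℝ) ≤ (r:ℝ) + 1 := by linarith
    have h0 : (0:ℝ) ≤ ((r-1:ℕ):ℝ) := Nat.cast_nonneg _
    have h1 : (0:ℝ) ≤ |z| ^ (r-1-1) := by positivity
    have step : ((r-1:ℕ):ℝ) * |z| ^ (r-1-1) ≤ ((r:ℝ)+1) * t₀ ^ r :=
      mul_le_mul hr1 hzp h1 (by positivity)
    calc (r:ℝ) * (((r-1:ℕ):ℝ) * |z| ^ (r-1-1)) ≤ ((r:ℝ)+1) * (((r:ℝ)+1) * t₀ ^ r) :=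
          mul_le_mul hrr step (by positivity) (by positivity)
      _ = ((r:ℝ)+1)^2 * t₀ ^ r := by ring
  have hAfun : Afun μ a = fun z => ∑' r : ℕ, a r * z ^ r / gamRec μ r := rfl
  have hg0sum : Summable (fun r : ℕ => a r * (1:ℝ) ^ r / gamRec μ r) := by
    obtain ⟨R, hR, hs'⟩ := hA
    exact hs' 1 (by rw [abs_one]; exact hR)
  have key : ∀ z ∈ s, HasDerivAt (Afun μ a) (∑' r : ℕ, g' r z) z := by
    intro z hz
    rw [hAfun]
    exact hasDerivAt_tsum_of_isPreconnected hM hso hsc (fun r y _ => hg r y)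
      hb' h1s hg0sum hz
  constructor
  · rw [(key 1 h1s).deriv]
    refine tsum_congr fun r => ?_
    rw [hg'def]; simp only [one_pow]; ring
  constructor
  · rw [(key (-1) hm1s).deriv]
    refine tsum_congr fun r => ?_
    rw [hg'def]; ring
  · have hEq : Set.EqOn (deriv (Afun μ a)) (fun z => ∑' r : ℕ, g' r z) s :=
      fun z hz => (key z hz).deriv
    have hev : deriv (Afun μ a) =ᶠ[nhds 1] (fun z => ∑' r : ℕ, g' r z) :=
      (hso.eventually_mem h1s).mono fun z hz => hEq hz
    rw [hev.deriv_eq]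
    have hg'1sum : Summable (fun r : ℕ => g' r 1) := by
      refine (A_w' hμ hA (C := 1) zero_le_one (fun r => (r:ℝ)) fun r => ?_).congr fun r => ?_
      · rw [abs_of_nonneg (Nat.cast_nonneg r)]
        nlinarith [Nat.cast_nonneg (α := ℝ) r]
      · rw [hg'def]; simp only [one_pow]; ring
    have h2 : HasDerivAt (fun z => ∑' r : ℕ, g' r z) (∑' r : ℕ, g'' r 1) 1 :=
      hasDerivAt_tsum_of_isPreconnected hM hso hsc (fun r y _ => hgg r y)
        hb'' h1s hg'1sum h1s
    rw [h2.deriv]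
    refine tsum_congr fun r => ?_
    rw [hg''def]
    rcases r with _ | m
    · simp
    · simp only [Nat.succ_sub_one, one_pow, mul_one]
      push_cast
      ring

lemma alpha_zero (μ : ℝ) : (0:ℝ) + 2*μ*theta 0 = 0 := by norm_num [theta]

lemma theta_zero : theta 0 = 0 := by norm_num [theta]

lemma weight_bound {μ : ℝ} (hμ : 0 ≤ μ) (j : ℕ) :
    |(j:ℝ) + 2*μ*theta j| ≤ (1+2*μ) * ((j:ℝ)+1) := by
  have h1 := theta_nonneg j
  have h2 := theta_le_one j
  have h3 : (0:ℝ) ≤ (j:ℝ) := Nat.cast_nonneg j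
  rw [abs_of_nonneg (by nlinarith)]
  nlinarith

lemma e_sums {μ y : ℝ} (hμ : 0 ≤ μ) (hy : 0 ≤ y) :
    (∑' j : ℕ, (y^j/gamRec μ j)) = emu μ y ∧
    (∑' j : ℕ, (-1:ℝ)^j * (y^j/gamRec μ j)) = emu μ (-y) ∧
    (∑' j : ℕ, theta j * (y^j/gamRec μ j)) = (emu μ y - emu μ (-y))/2 ∧
    (∑' j : ℕ, ((j:ℝ)+2*μ*theta j) * (y^j/gamRec μ j)) = y * emu μ y ∧
    (∑' j : ℕ, theta j * (((j:ℝ)+2*μ*theta j) * (y^j/gamRec μ j))) =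
      y * (emu μ y + emu μ (-y))/2 ∧
    (∑' j : ℕ, ((j:ℝ)+2*μ*theta j)^2 * (y^j/gamRec μ j)) =
      y*y*emu μ y + y*emu μ y + 2*μ*y*emu μ (-y) := by
  set C : ℝ := (1+2*μ)^2 + 1 with hCdef
  have hC : 0 ≤ C := by positivity
  have hb1 : ∀ j : ℕ, |(1:ℝ)| ≤ C * ((j:ℝ)+1)^2 := by
    intro j
    have : (1:ℝ) ≤ ((j:ℝ)+1)^2 := by nlinarith [Nat.cast_nonneg (α := ℝ) j]
    rw [abs_one]; nlinarith
  have hbs : ∀ j : ℕ, |(-1:ℝ)^j| ≤ C * ((j:ℝ)+1)^2 := by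
    intro j
    rw [abs_pow, abs_neg, abs_one, one_pow]
    have := hb1 j; rwa [abs_one] at this
  have hbθ : ∀ j : ℕ, |theta j| ≤ C * ((j:ℝ)+1)^2 := by
    intro j
    rw [abs_of_nonneg (theta_nonneg j)]
    have := theta_le_one j
    have h1 : (1:ℝ) ≤ C * ((j:ℝ)+1)^2 := by
      have := hb1 j; rwa [abs_one] at this
    linarith
  have haC : (1+2*μ) ≤ C := by nlinarith [sq_nonneg μ]
  have hbα : ∀ j : ℕ, |(j:ℝ)+2*μ*theta j| ≤ C * ((j:ℝ)+1)^2 := by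
    intro j
    refine (weight_bound hμ j).trans ?_
    have h3 : (0:ℝ) ≤ (j:ℝ) := Nat.cast_nonneg j
    have hj : ((j:ℝ)+1) ≤ ((j:ℝ)+1)^2 := by nlinarith
    calc (1+2*μ) * ((j:ℝ)+1) ≤ C * ((j:ℝ)+1) :=
          mul_le_mul_of_nonneg_right haC (by linarith)
      _ ≤ C * ((j:ℝ)+1)^2 := mul_le_mul_of_nonneg_left hj hC
  have hbθα : ∀ j : ℕ, |theta j * ((j:ℝ)+2*μ*theta j)| ≤ C * ((j:ℝ)+1)^2 := by
    intro j
    rw [abs_mul]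
    have h1 := theta_nonneg j
    have h2 := theta_le_one j
    refine le_trans ?_ (hbα j)
    have := abs_nonneg ((j:ℝ)+2*μ*theta j)
    rw [abs_of_nonneg h1]
    nlinarith
  have hbα2 : ∀ j : ℕ, |((j:ℝ)+2*μ*theta j)^2| ≤ C * ((j:ℝ)+1)^2 := by
    intro j
    rw [abs_of_nonneg (sq_nonneg _), ← sq_abs]
    have h := weight_bound hμ j
    have h3 : (0:ℝ) ≤ (j:ℝ) := Nat.cast_nonneg j
    have h0 := abs_nonneg ((j:ℝ)+2*μ*theta j)
    have hsq := mul_le_mul h h h0 (by positivity : (0:ℝ) ≤ (1+2*μ)*((j:ℝ)+1))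
    nlinarith [sq_nonneg ((j:ℝ)+1)]
  have Su : Summable (fun j : ℕ => y^j/gamRec μ j) := by
    have := e_w' hμ hy hC (fun _ => (1:ℝ)) hb1
    simpa using this
  have Ssign : Summable (fun j : ℕ => (-1:ℝ)^j * (y^j/gamRec μ j)) :=
    e_w' hμ hy hC _ hbs
  have Sθ : Summable (fun j : ℕ => theta j * (y^j/gamRec μ j)) := e_w' hμ hy hC _ hbθ
  have Sα : Summable (fun j : ℕ => ((j:ℝ)+2*μ*theta j) * (y^j/gamRec μ j)) :=
    e_w' hμ hy hC _ hbα
  have Sθα : Summable (fun j : ℕ => theta j * (((j:ℝ)+2*μ*theta j) * (y^j/gamRec μ j))) := by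
    have := e_w' hμ hy hC _ hbθα
    exact this.congr fun j => by ring
  have Sα2 : Summable (fun j : ℕ => ((j:ℝ)+2*μ*theta j)^2 * (y^j/gamRec μ j)) :=
    e_w' hμ hy hC _ hbα2
  have h1 : (∑' j : ℕ, (y^j/gamRec μ j)) = emu μ y := rfl
  have h2 : (∑' j : ℕ, (-1:ℝ)^j * (y^j/gamRec μ j)) = emu μ (-y) := by
    rw [emu]
    refine tsum_congr fun j => ?_
    rw [neg_pow]
    ring
  have hθpt : ∀ j : ℕ, theta j * (y^j/gamRec μ j) =
      ((y^j/gamRec μ j) - (-1:ℝ)^j * (y^j/gamRec μ j))/2 := by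
    intro j
    rcases Nat.mod_two_eq_zero_or_one j with h | h
    · have he : Even j := Nat.even_iff.mpr h
      rw [he.neg_one_pow]
      unfold theta
      rw [if_neg (by omega)]
      ring
    · have ho : Odd j := Nat.odd_iff.mpr h
      rw [ho.neg_one_pow]
      unfold theta
      rw [if_pos h]
      ring
  have h3 : (∑' j : ℕ, theta j * (y^j/gamRec μ j)) = (emu μ y - emu μ (-y))/2 := by
    rw [tsum_congr hθpt, tsum_div_const, Summable.tsum_sub Su Ssign, h1, h2]
  -- shifted families
  have hshift : ∀ m : ℕ, ((m:ℝ)+1+2*μ*theta (m+1)) * (y^(m+1)/gamRec μ (m+1)) =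
      y * (y^m/gamRec μ m) := by
    intro m
    have hfac : (0:ℝ) < (m:ℝ) + 1 + 2*μ*theta (m+1) := by
      have := theta_nonneg (m+1)
      have : (0:ℝ) ≤ 2*μ*theta (m+1) := by positivity
      have hm : (0:ℝ) ≤ (m:ℝ) := Nat.cast_nonneg m
      linarith
    rw [gam_succ]
    have hg := gam_pos hμ m
    push_cast
    field_simp
    ring
  have h4 : (∑' j : ℕ, ((j:ℝ)+2*μ*theta j) * (y^j/gamRec μ j)) = y * emu μ y := by
    rw [Summable.tsum_eq_zero_add Sα]
    norm_num [theta_zero]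
    rw [tsum_congr hshift, tsum_mul_left, h1]
  have h5 : (∑' j : ℕ, theta j * (((j:ℝ)+2*μ*theta j) * (y^j/gamRec μ j))) =
      y * (emu μ y + emu μ (-y))/2 := by
    rw [Summable.tsum_eq_zero_add Sθα]
    norm_num [theta_zero]
    have hpt : ∀ m : ℕ, theta (m+1) * (((m:ℝ)+1+2*μ*theta (m+1)) * (y^(m+1)/gamRec μ (m+1)))
        = y * (y^m/gamRec μ m) - theta m * (y * (y^m/gamRec μ m)) := by
      intro m
      rw [hshift m, theta_succ]
      ring
    rw [tsum_congr hpt]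
    have SA : Summable (fun m : ℕ => y * (y^m/gamRec μ m)) := Su.mul_left y
    have SB : Summable (fun m : ℕ => theta m * (y * (y^m/gamRec μ m))) :=
      (Sθ.mul_left y).congr fun m => by ring
    rw [Summable.tsum_sub SA SB, tsum_mul_left, h1]
    have hBB : (∑' m : ℕ, theta m * (y * (y^m/gamRec μ m))) =
        y * ((emu μ y - emu μ (-y))/2) := by
      rw [← h3, ← tsum_mul_left]
      exact tsum_congr fun m => by ring
    rw [hBB]
    ring
  have h6 : (∑' j : ℕ, ((j:ℝ)+2*μ*theta j)^2 * (y^j/gamRec μ j)) =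
      y*y*emu μ y + y*emu μ y + 2*μ*y*emu μ (-y) := by
    rw [Summable.tsum_eq_zero_add Sα2]
    norm_num [theta_zero]
    have hpt : ∀ m : ℕ, ((m:ℝ)+1+2*μ*theta (m+1))^2 * (y^(m+1)/gamRec μ (m+1))
        = y*(((m:ℝ)+2*μ*theta m) * (y^m/gamRec μ m)) +
          (((1+2*μ)*y)*(y^m/gamRec μ m) - (4*μ*y)*(theta m * (y^m/gamRec μ m))) := by
      intro m
      calc ((m:ℝ)+1+2*μ*theta (m+1))^2 * (y^(m+1)/gamRec μ (m+1))
          = ((m:ℝ)+1+2*μ*theta (m+1)) *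
            (((m:ℝ)+1+2*μ*theta (m+1)) * (y^(m+1)/gamRec μ (m+1))) := by ring
        _ = ((m:ℝ)+1+2*μ*theta (m+1)) * (y * (y^m/gamRec μ m)) := by rw [hshift m]
        _ = _ := by rw [theta_succ]; push_cast; ring
    have SA : Summable (fun m : ℕ => y*(((m:ℝ)+2*μ*theta m) * (y^m/gamRec μ m))) :=
      Sα.mul_left y
    have SB : Summable (fun m : ℕ => ((1+2*μ)*y)*(y^m/gamRec μ m)) :=
      Su.mul_left _
    have SC : Summable (fun m : ℕ => (4*μ*y)*(theta m * (y^m/gamRec μ m))) :=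
      Sθ.mul_left _
    rw [tsum_congr hpt, Summable.tsum_add SA (SB.sub SC), Summable.tsum_sub SB SC,
      tsum_mul_left, tsum_mul_left, tsum_mul_left, h4, h1, h3]
    ring
  exact ⟨h1, h2, h3, h4, h5, h6⟩

lemma a_sums {μ : ℝ} {a : ℕ → ℝ} (hμ : 0 ≤ μ) (hA : AnalyticHyp μ a) :
    (∑' r : ℕ, (a r / gamRec μ r)) = Afun μ a 1 ∧
    (∑' r : ℕ, (-1:ℝ)^r * (a r / gamRec μ r)) = Afun μ a (-1) ∧
    (∑' r : ℕ, theta r * (a r / gamRec μ r)) = (Afun μ a 1 - Afun μ a (-1))/2 ∧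
    (∑' r : ℕ, ((r:ℝ)+2*μ*theta r) * (a r / gamRec μ r)) =
      deriv (Afun μ a) 1 + μ*(Afun μ a 1 - Afun μ a (-1)) ∧
    (∑' r : ℕ, theta r * (((r:ℝ)+2*μ*theta r) * (a r / gamRec μ r))) =
      (deriv (Afun μ a) 1 + deriv (Afun μ a) (-1))/2 + μ*(Afun μ a 1 - Afun μ a (-1)) ∧
    (∑' r : ℕ, ((r:ℝ)+2*μ*theta r)^2 * (a r / gamRec μ r)) =
      (deriv (deriv (Afun μ a)) 1 + deriv (Afun μ a) 1) +
        2*μ*(deriv (Afun μ a) 1 + deriv (Afun μ a) (-1)) +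
        2*μ^2*(Afun μ a 1 - Afun μ a (-1)) := by
  obtain ⟨hd1, hdm, hd2⟩ := afun_derivs hμ hA
  set C : ℝ := (1+2*μ)^2 + 1 with hCdef
  have hC : 0 ≤ C := by positivity
  have haC : (1+2*μ) ≤ C := by nlinarith [sq_nonneg μ]
  have hone : ∀ r : ℕ, (1:ℝ) ≤ C * ((r:ℝ)+1)^2 := by
    intro r
    have h3 : (0:ℝ) ≤ (r:ℝ) := Nat.cast_nonneg r
    nlinarith
  have hb1 : ∀ r : ℕ, |(1:ℝ)| ≤ C * ((r:ℝ)+1)^2 := fun r => by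
    rw [abs_one]; exact hone r
  have hbs : ∀ r : ℕ, |(-1:ℝ)^r| ≤ C * ((r:ℝ)+1)^2 := fun r => by
    rw [abs_pow, abs_neg, abs_one, one_pow]; exact hone r
  have hbθ : ∀ r : ℕ, |theta r| ≤ C * ((r:ℝ)+1)^2 := fun r => by
    rw [abs_of_nonneg (theta_nonneg r)]
    exact (theta_le_one r).trans (hone r)
  have hbr : ∀ r : ℕ, |(r:ℝ)| ≤ C * ((r:ℝ)+1)^2 := by
    intro r
    have h3 : (0:ℝ) ≤ (r:ℝ) := Nat.cast_nonneg r
    rw [abs_of_nonneg h3]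
    nlinarith
  have hbrs : ∀ r : ℕ, |(r:ℝ) * (-1:ℝ)^(r-1)| ≤ C * ((r:ℝ)+1)^2 := by
    intro r
    rw [abs_mul, abs_pow, abs_neg, abs_one, one_pow, mul_one]
    exact hbr r
  have hbrr : ∀ r : ℕ, |(r:ℝ) * ((r:ℝ)-1)| ≤ C * ((r:ℝ)+1)^2 := by
    intro r
    have h3 : (0:ℝ) ≤ (r:ℝ) := Nat.cast_nonneg r
    rw [abs_mul, abs_of_nonneg h3]
    have h4 : |(r:ℝ)-1| ≤ (r:ℝ)+1 := by
      rw [abs_le]; constructor <;> linarith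
    calc (r:ℝ) * |(r:ℝ)-1| ≤ ((r:ℝ)+1) * ((r:ℝ)+1) :=
          mul_le_mul (by linarith) h4 (abs_nonneg _) (by linarith)
      _ = 1 * ((r:ℝ)+1)^2 := by ring
      _ ≤ C * ((r:ℝ)+1)^2 := by nlinarith
  have hbθr : ∀ r : ℕ, |theta r * (r:ℝ)| ≤ C * ((r:ℝ)+1)^2 := by
    intro r
    rw [abs_mul, abs_of_nonneg (theta_nonneg r)]
    have h3 : (0:ℝ) ≤ (r:ℝ) := Nat.cast_nonneg r
    have := theta_le_one r
    calc theta r * |(r:ℝ)| ≤ 1 * |(r:ℝ)| :=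
          mul_le_mul_of_nonneg_right this (abs_nonneg _)
      _ = |(r:ℝ)| := one_mul _
      _ ≤ C * ((r:ℝ)+1)^2 := hbr r
  have hbα : ∀ r : ℕ, |(r:ℝ)+2*μ*theta r| ≤ C * ((r:ℝ)+1)^2 := by
    intro r
    refine (weight_bound hμ r).trans ?_
    have h3 : (0:ℝ) ≤ (r:ℝ) := Nat.cast_nonneg r
    have hj : ((r:ℝ)+1) ≤ ((r:ℝ)+1)^2 := by nlinarith
    calc (1+2*μ) * ((r:ℝ)+1) ≤ C * ((r:ℝ)+1) :=
          mul_le_mul_of_nonneg_right haC (by linarith)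
      _ ≤ C * ((r:ℝ)+1)^2 := mul_le_mul_of_nonneg_left hj hC
  have hbθα : ∀ r : ℕ, |theta r * ((r:ℝ)+2*μ*theta r)| ≤ C * ((r:ℝ)+1)^2 := by
    intro r
    rw [abs_mul, abs_of_nonneg (theta_nonneg r)]
    refine le_trans ?_ (hbα r)
    have h1 := theta_nonneg r
    have h2 := theta_le_one r
    have := abs_nonneg ((r:ℝ)+2*μ*theta r)
    nlinarith
  have hbα2 : ∀ r : ℕ, |((r:ℝ)+2*μ*theta r)^2| ≤ C * ((r:ℝ)+1)^2 := by
    intro r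
    rw [abs_of_nonneg (sq_nonneg _), ← sq_abs]
    have h := weight_bound hμ r
    have h3 : (0:ℝ) ≤ (r:ℝ) := Nat.cast_nonneg r
    have h0 := abs_nonneg ((r:ℝ)+2*μ*theta r)
    have hsq := mul_le_mul h h h0 (by positivity : (0:ℝ) ≤ (1+2*μ)*((r:ℝ)+1))
    nlinarith [sq_nonneg ((r:ℝ)+1)]
  have Sv : Summable (fun r : ℕ => a r / gamRec μ r) := by
    have := A_w' hμ hA hC (fun _ => (1:ℝ)) hb1
    simpa using this
  have Ssign : Summable (fun r : ℕ => (-1:ℝ)^r * (a r / gamRec μ r)) := A_w' hμ hA hC _ hbs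
  have Sθ : Summable (fun r : ℕ => theta r * (a r / gamRec μ r)) := A_w' hμ hA hC _ hbθ
  have Sr : Summable (fun r : ℕ => (r:ℝ) * (a r / gamRec μ r)) := A_w' hμ hA hC _ hbr
  have Srs : Summable (fun r : ℕ => ((r:ℝ) * (-1:ℝ)^(r-1)) * (a r / gamRec μ r)) :=
    A_w' hμ hA hC _ hbrs
  have Srr : Summable (fun r : ℕ => ((r:ℝ) * ((r:ℝ)-1)) * (a r / gamRec μ r)) :=
    A_w' hμ hA hC _ hbrr
  have Sθr : Summable (fun r : ℕ => (theta r * (r:ℝ)) * (a r / gamRec μ r)) :=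
    A_w' hμ hA hC _ hbθr
  have h1 : (∑' r : ℕ, (a r / gamRec μ r)) = Afun μ a 1 := by
    rw [Afun]
    exact tsum_congr fun r => by rw [one_pow, mul_one]
  have h2 : (∑' r : ℕ, (-1:ℝ)^r * (a r / gamRec μ r)) = Afun μ a (-1) := by
    rw [Afun]
    exact tsum_congr fun r => by ring
  have hθpt : ∀ r : ℕ, theta r * (a r / gamRec μ r) =
      ((a r / gamRec μ r) - (-1:ℝ)^r * (a r / gamRec μ r))/2 := by
    intro r
    rcases Nat.mod_two_eq_zero_or_one r with h | h
    · rw [(Nat.even_iff.mpr h).neg_one_pow]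
      unfold theta
      rw [if_neg (by omega)]
      ring
    · rw [(Nat.odd_iff.mpr h).neg_one_pow]
      unfold theta
      rw [if_pos h]
      ring
  have h3 : (∑' r : ℕ, theta r * (a r / gamRec μ r)) = (Afun μ a 1 - Afun μ a (-1))/2 := by
    rw [tsum_congr hθpt, tsum_div_const, Summable.tsum_sub Sv Ssign, h1, h2]
  have hθrpt : ∀ r : ℕ, (theta r * (r:ℝ)) * (a r / gamRec μ r) =
      ((r:ℝ) * (a r / gamRec μ r) + ((r:ℝ) * (-1:ℝ)^(r-1)) * (a r / gamRec μ r))/2 := by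
    intro r
    rcases Nat.mod_two_eq_zero_or_one r with h | h
    · rcases r with _ | m
      · norm_num
      · have hm : Odd m := by
          rw [Nat.odd_iff]; omega
        rw [Nat.succ_sub_one, hm.neg_one_pow]
        unfold theta
        rw [if_neg (by omega)]
        ring
    · have hm : Even (r - 1) := by
        rcases r with _ | m
        · simp at h
        · rw [Nat.succ_sub_one, Nat.even_iff]; omega
      rw [hm.neg_one_pow]
      unfold theta
      rw [if_pos h]
      ring
  have hθr : (∑' r : ℕ, (theta r * (r:ℝ)) * (a r / gamRec μ r)) =
      (deriv (Afun μ a) 1 + deriv (Afun μ a) (-1))/2 := by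
    rw [tsum_congr hθrpt, tsum_div_const, Summable.tsum_add Sr Srs, hd1, hdm]
  have h4 : (∑' r : ℕ, ((r:ℝ)+2*μ*theta r) * (a r / gamRec μ r)) =
      deriv (Afun μ a) 1 + μ*(Afun μ a 1 - Afun μ a (-1)) := by
    have hpt : ∀ r : ℕ, ((r:ℝ)+2*μ*theta r) * (a r / gamRec μ r) =
        (r:ℝ) * (a r / gamRec μ r) + (2*μ) * (theta r * (a r / gamRec μ r)) := by
      intro r; ring
    rw [tsum_congr hpt, Summable.tsum_add Sr (Sθ.mul_left _), tsum_mul_left, hd1, h3]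
    ring
  have h5 : (∑' r : ℕ, theta r * (((r:ℝ)+2*μ*theta r) * (a r / gamRec μ r))) =
      (deriv (Afun μ a) 1 + deriv (Afun μ a) (-1))/2 + μ*(Afun μ a 1 - Afun μ a (-1)) := by
    have hpt : ∀ r : ℕ, theta r * (((r:ℝ)+2*μ*theta r) * (a r / gamRec μ r)) =
        (theta r * (r:ℝ)) * (a r / gamRec μ r) + (2*μ) * (theta r * (a r / gamRec μ r)) := by
      intro r
      have hsq : theta r * theta r = theta r := by
        rcases theta_eq r with h | h <;> rw [h] <;> ring
      linear_combination (2*μ*(a r / gamRec μ r)) * hsq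
    rw [tsum_congr hpt, Summable.tsum_add Sθr (Sθ.mul_left _), tsum_mul_left, hθr, h3]
    ring
  have h6 : (∑' r : ℕ, ((r:ℝ)+2*μ*theta r)^2 * (a r / gamRec μ r)) =
      (deriv (deriv (Afun μ a)) 1 + deriv (Afun μ a) 1) +
        2*μ*(deriv (Afun μ a) 1 + deriv (Afun μ a) (-1)) +
        2*μ^2*(Afun μ a 1 - Afun μ a (-1)) := by
    have hpt : ∀ r : ℕ, ((r:ℝ)+2*μ*theta r)^2 * (a r / gamRec μ r) =
        ((r:ℝ) * ((r:ℝ)-1)) * (a r / gamRec μ r) + (r:ℝ) * (a r / gamRec μ r)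
          + (4*μ) * ((theta r * (r:ℝ)) * (a r / gamRec μ r))
          + (4*μ^2) * (theta r * (a r / gamRec μ r)) := by
      intro r
      have hsq : theta r * theta r = theta r := by
        rcases theta_eq r with h | h <;> rw [h] <;> ring
      linear_combination (4*μ^2*(a r / gamRec μ r)) * hsq
    rw [tsum_congr hpt, Summable.tsum_add (((Srr.add Sr)).add (Sθr.mul_left _)) (Sθ.mul_left _),
      Summable.tsum_add (Srr.add Sr) (Sθr.mul_left _), Summable.tsum_add Srr Sr,
      tsum_mul_left, tsum_mul_left, hθr, h3, hd1, hd2]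
    ring
  exact ⟨h1, h2, h3, h4, h5, h6⟩

lemma cauchy_piece (u v : ℕ → ℝ) (hu : Summable fun j => |u j|) (hv : Summable fun r => |v r|) :
    Summable (fun k => ∑ j ∈ Finset.range (k+1), u j * v (k-j)) ∧
    (∑' k : ℕ, ∑ j ∈ Finset.range (k+1), u j * v (k-j)) = (∑' j, u j) * (∑' r, v r) := by
  have hu' : Summable fun j => ‖u j‖ := by simpa [Real.norm_eq_abs] using hu
  have hv' : Summable fun r => ‖v r‖ := by simpa [Real.norm_eq_abs] using hv
  exact ⟨(summable_norm_sum_mul_range_of_summable_norm hu' hv').of_norm,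
    (tsum_mul_tsum_eq_tsum_sum_range_of_summable_norm hu' hv').symm⟩

lemma emu_pos {μ t : ℝ} (hμ : 0 ≤ μ) (ht : 0 ≤ t) : 0 < emu μ t := by
  have Su : Summable (fun j : ℕ => t^j/gamRec μ j) := by
    have hb1 : ∀ j : ℕ, |(1:ℝ)| ≤ 1 * ((j:ℝ)+1)^2 := by
      intro j
      rw [abs_one, one_mul]
      nlinarith [Nat.cast_nonneg (α := ℝ) j]
    have := e_w' hμ ht zero_le_one (fun _ => (1:ℝ)) hb1
    simpa using this
  have h0 : (1:ℝ) ≤ emu μ t := by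
    have := Summable.le_tsum Su 0 (fun j _ => by have := gam_pos hμ j; positivity)
    simpa [gamRec, emu] using this
  linarith

lemma gamma_integral {s : ℝ} (hs : 0 ≤ s) {n : ℕ} (hn : 1 ≤ n) :
    (∫ t in Set.Ioi (0:ℝ), Real.exp (-(n:ℝ) * t) * t ^ s * t ^ (2:ℕ)) =
      (1/(n:ℝ)) ^ (s+3) * Real.Gamma (s+3) := by
  have hn0 : (0:ℝ) < n := by exact_mod_cast Nat.lt_of_lt_of_le Nat.zero_lt_one hn
  rw [← Real.integral_rpow_mul_exp_neg_mul_Ioi (show (0:ℝ) < s + 3 by linarith) hn0]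
  refine setIntegral_congr_fun measurableSet_Ioi fun t ht => ?_
  have ht' : (0:ℝ) < t := ht
  have h1 : t ^ (s + 3 - 1) = t ^ s * t ^ (2:ℕ) := by
    rw [show s + 3 - 1 = s + (2:ℕ) by push_cast; ring, Real.rpow_add ht',
      Real.rpow_natCast]
  rw [h1, neg_mul]
  ring

lemma coef_alg {s : ℝ} (hs : 0 ≤ s) {n : ℕ} (hn : 1 ≤ n) :
    (n:ℝ) ^ (s+1) / Real.Gamma (s+1) * ((1/(n:ℝ)) ^ (s+3) * Real.Gamma (s+3)) =
      ((s+1)*(s+2)) * (((n:ℝ)^(2:ℕ))⁻¹) := by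
  have hn0 : (0:ℝ) < n := by exact_mod_cast Nat.lt_of_lt_of_le Nat.zero_lt_one hn
  have hΓ1 : (0:ℝ) < Real.Gamma (s+1) := Real.Gamma_pos_of_pos (by linarith)
  have hΓ3 : Real.Gamma (s+3) = (s+2)*((s+1)*Real.Gamma (s+1)) := by
    rw [show s + 3 = (s+2) + 1 by ring, Real.Gamma_add_one (by linarith : s+2 ≠ 0),
      show s + 2 = (s+1) + 1 by ring, Real.Gamma_add_one (by linarith : s+1 ≠ 0)]
  have hpow : (1/(n:ℝ)) ^ (s+3) = ((n:ℝ) ^ (s+3))⁻¹ := by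
    rw [one_div, Real.inv_rpow hn0.le]
  have hsplit : (n:ℝ) ^ (s+3) = (n:ℝ) ^ (s+1) * (n:ℝ) ^ (2:ℕ) := by
    rw [← Real.rpow_natCast (n:ℝ) 2, ← Real.rpow_add hn0]
    congr 1
    push_cast
    ring
  have hr1 : (0:ℝ) < (n:ℝ) ^ (s+1) := Real.rpow_pos_of_pos hn0 _
  have hr2 : (0:ℝ) < (n:ℝ) ^ (2:ℕ) := by positivity
  rw [hΓ3, hpow, hsplit]
  field_simp

lemma qk_eq {μ : ℝ} (hμ : 0 ≤ μ) (a : ℕ → ℝ) (y : ℝ) (k : ℕ) :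
    pk μ a k y / gamRec μ k =
      ∑ j ∈ Finset.range (k+1), (y^j/gamRec μ j) * (a (k-j) / gamRec μ (k-j)) := by
  rw [pk, Finset.sum_div]
  refine Finset.sum_congr rfl fun j hj => ?_
  have h1 := (gam_pos hμ k).ne'
  have h2 := (gam_pos hμ j).ne'
  have h3 := (gam_pos hμ (k-j)).ne'
  field_simp

lemma piece_identity (μ lam y : ℝ) (a : ℕ → ℝ) (j r : ℕ) :
    (((j+r:ℕ):ℝ) + 2*μ*theta (j+r) + lam + 1) * ((((j+r:ℕ):ℝ) + 2*μ*theta (j+r) + lam + 2)) *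
        ((y^j/gamRec μ j) * (a r / gamRec μ r)) =
      (((j:ℝ)+2*μ*theta j)^2 * (y^j/gamRec μ j)) * (a r / gamRec μ r) +
      ((y^j/gamRec μ j) * (((r:ℝ)+2*μ*theta r)^2 * (a r / gamRec μ r)) +
      (((16*μ^2) * (theta j * (y^j/gamRec μ j))) * (theta r * (a r / gamRec μ r)) +
      ((2 * (((j:ℝ)+2*μ*theta j) * (y^j/gamRec μ j))) * (((r:ℝ)+2*μ*theta r) * (a r / gamRec μ r)) +
      (((-8*μ) * (theta j * (((j:ℝ)+2*μ*theta j) * (y^j/gamRec μ j)))) * (theta r * (a r / gamRec μ r)) +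
      (((-8*μ) * (theta j * (y^j/gamRec μ j))) * (theta r * (((r:ℝ)+2*μ*theta r) * (a r / gamRec μ r))) +
      (((2*lam+3) * (((j:ℝ)+2*μ*theta j) * (y^j/gamRec μ j))) * (a r / gamRec μ r) +
      (((2*lam+3) * (y^j/gamRec μ j)) * (((r:ℝ)+2*μ*theta r) * (a r / gamRec μ r)) +
      (((-4*μ*(2*lam+3)) * (theta j * (y^j/gamRec μ j))) * (theta r * (a r / gamRec μ r)) +
      (((lam+1)*(lam+2) * (y^j/gamRec μ j)) * (a r / gamRec μ r)))))))))) := by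
  rcases theta_eq j with hj | hj <;> rcases theta_eq r with hr | hr <;>
    rw [theta_add, hj, hr] <;> push_cast <;> ring

noncomputable def NP (μ lam y : ℝ) (a : ℕ → ℝ) (j r : ℕ) : ℝ :=
      (((j:ℝ)+2*μ*theta j)^2 * (y^j/gamRec μ j)) * (a r / gamRec μ r) +
      ((y^j/gamRec μ j) * (((r:ℝ)+2*μ*theta r)^2 * (a r / gamRec μ r)) +
      (((16*μ^2) * (theta j * (y^j/gamRec μ j))) * (theta r * (a r / gamRec μ r)) +
      ((2 * (((j:ℝ)+2*μ*theta j) * (y^j/gamRec μ j))) * (((r:ℝ)+2*μ*theta r) * (a r / gamRec μ r)) +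
      (((-8*μ) * (theta j * (((j:ℝ)+2*μ*theta j) * (y^j/gamRec μ j)))) * (theta r * (a r / gamRec μ r)) +
      (((-8*μ) * (theta j * (y^j/gamRec μ j))) * (theta r * (((r:ℝ)+2*μ*theta r) * (a r / gamRec μ r))) +
      (((2*lam+3) * (((j:ℝ)+2*μ*theta j) * (y^j/gamRec μ j))) * (a r / gamRec μ r) +
      (((2*lam+3) * (y^j/gamRec μ j)) * (((r:ℝ)+2*μ*theta r) * (a r / gamRec μ r)) +
      (((-4*μ*(2*lam+3)) * (theta j * (y^j/gamRec μ j))) * (theta r * (a r / gamRec μ r)) +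
      (((lam+1)*(lam+2) * (y^j/gamRec μ j)) * (a r / gamRec μ r))))))))))

lemma piece_identity' (μ lam y : ℝ) (a : ℕ → ℝ) (j r : ℕ) :
    (((j+r:ℕ):ℝ) + 2*μ*theta (j+r) + lam + 1) * ((((j+r:ℕ):ℝ) + 2*μ*theta (j+r) + lam + 2)) *
        ((y^j/gamRec μ j) * (a r / gamRec μ r)) = NP μ lam y a j r := by
  rw [NP]
  exact piece_identity μ lam y a j r

lemma habs_mul (c : ℝ) (f : ℕ → ℝ) (hf : Summable fun i => |f i|) :
    Summable (fun i => |c * f i|) := by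
  simpa [abs_mul] using hf.mul_left |c|

set_option maxHeartbeats 4000000 in
theorem Dop_second_moment (μ lam : ℝ) (hμ : 0 ≤ μ) (hlam : 0 ≤ lam) (a : ℕ → ℝ) (ha0 : a 0 ≠ 0)
    (hA : AnalyticHyp μ a) (hA1 : Afun μ a 1 ≠ 0)
    (hpos : ∀ r : ℕ, 0 ≤ a r / Afun μ a 1)
    (n : ℕ) (hn : 1 ≤ n) (x : ℝ) (hx : 0 ≤ x) :
    Dop μ lam a n (fun t => t ^ 2) x =
      x ^ 2 +
      (x / n) * (2 * μ * (emu μ (-(n * x)) / emu μ (n * x)) * (Afun μ a (-1) / Afun μ a 1) +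
        2 * deriv (Afun μ a) 1 / Afun μ a 1 + 2 * lam + 4) +
      (2 * μ / (n : ℝ) ^ 2) * (emu μ (-(n * x)) / emu μ (n * x)) *
        ((deriv (Afun μ a) 1 + deriv (Afun μ a) (-1)) / Afun μ a 1) +
      (2 * μ ^ 2 / (n : ℝ) ^ 2) * ((Afun μ a 1 - Afun μ a (-1)) / Afun μ a 1) +
      (μ * (2 * lam + 3) / (n : ℝ) ^ 2) * (emu μ (-(n * x)) / emu μ (n * x)) *
        ((Afun μ a 1 - Afun μ a (-1)) / Afun μ a 1) +
      (1 / (n : ℝ) ^ 2) * (deriv (deriv (Afun μ a)) 1 / Afun μ a 1 +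
        (2 * lam + 4) * deriv (Afun μ a) 1 / Afun μ a 1 + (lam + 1) * (lam + 2)) := by
  have hn0 : (0:ℝ) < (n:ℝ) := by
    have : (0:ℕ) < n := Nat.lt_of_lt_of_le Nat.zero_lt_one hn
    exact_mod_cast this
  have hy : (0:ℝ) ≤ (n:ℝ) * x := by positivity
  obtain ⟨he1, he2, he3, he4, he5, he6⟩ := e_sums (μ := μ) (y := (n:ℝ)*x) hμ hy
  obtain ⟨ha1', ha2', ha3', ha4', ha5', ha6'⟩ := a_sums (μ := μ) (a := a) hμ hA
  -- weight bounds
  set C : ℝ := (1+2*μ)^2 + 1 with hCdef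
  have hC : 0 ≤ C := by positivity
  have haC : (1+2*μ) ≤ C := by nlinarith [sq_nonneg μ]
  have hone : ∀ j : ℕ, (1:ℝ) ≤ C * ((j:ℝ)+1)^2 := by
    intro j
    have h3 : (0:ℝ) ≤ (j:ℝ) := Nat.cast_nonneg j
    nlinarith
  have hb1 : ∀ j : ℕ, |(1:ℝ)| ≤ C * ((j:ℝ)+1)^2 := fun j => by
    rw [abs_one]; exact hone j
  have hbθ : ∀ j : ℕ, |theta j| ≤ C * ((j:ℝ)+1)^2 := fun j => by
    rw [abs_of_nonneg (theta_nonneg j)]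
    exact (theta_le_one j).trans (hone j)
  have hbα : ∀ j : ℕ, |(j:ℝ)+2*μ*theta j| ≤ C * ((j:ℝ)+1)^2 := by
    intro j
    refine (weight_bound hμ j).trans ?_
    have h3 : (0:ℝ) ≤ (j:ℝ) := Nat.cast_nonneg j
    have hj : ((j:ℝ)+1) ≤ ((j:ℝ)+1)^2 := by nlinarith
    calc (1+2*μ) * ((j:ℝ)+1) ≤ C * ((j:ℝ)+1) :=
          mul_le_mul_of_nonneg_right haC (by linarith)
      _ ≤ C * ((j:ℝ)+1)^2 := mul_le_mul_of_nonneg_left hj hC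
  have hbθα : ∀ j : ℕ, |theta j * ((j:ℝ)+2*μ*theta j)| ≤ C * ((j:ℝ)+1)^2 := by
    intro j
    rw [abs_mul, abs_of_nonneg (theta_nonneg j)]
    refine le_trans ?_ (hbα j)
    have h1 := theta_nonneg j
    have h2 := theta_le_one j
    have := abs_nonneg ((j:ℝ)+2*μ*theta j)
    nlinarith
  have hbα2 : ∀ j : ℕ, |((j:ℝ)+2*μ*theta j)^2| ≤ C * ((j:ℝ)+1)^2 := by
    intro j
    rw [abs_of_nonneg (sq_nonneg _), ← sq_abs]
    have h := weight_bound hμ j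
    have h3 : (0:ℝ) ≤ (j:ℝ) := Nat.cast_nonneg j
    have h0 := abs_nonneg ((j:ℝ)+2*μ*theta j)
    have hsq := mul_le_mul h h h0 (by positivity : (0:ℝ) ≤ (1+2*μ)*((j:ℝ)+1))
    nlinarith [sq_nonneg ((j:ℝ)+1)]
  -- abs-summability, e-side
  have su : Summable (fun j : ℕ => |((n:ℝ)*x)^j/gamRec μ j|) := by
    have := e_w hμ hy hC (fun _ => (1:ℝ)) hb1
    simpa using this
  have sα2u : Summable (fun j : ℕ => |((j:ℝ)+2*μ*theta j)^2 * (((n:ℝ)*x)^j/gamRec μ j)|) :=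
    e_w hμ hy hC _ hbα2
  have sθu : Summable (fun j : ℕ => |theta j * (((n:ℝ)*x)^j/gamRec μ j)|) :=
    e_w hμ hy hC _ hbθ
  have sαu : Summable (fun j : ℕ => |((j:ℝ)+2*μ*theta j) * (((n:ℝ)*x)^j/gamRec μ j)|) :=
    e_w hμ hy hC _ hbα
  have sθαu : Summable
      (fun j : ℕ => |theta j * (((j:ℝ)+2*μ*theta j) * (((n:ℝ)*x)^j/gamRec μ j))|) :=
    (e_w hμ hy hC _ hbθα).congr fun j => by rw [mul_assoc]
  -- abs-summability, A-side
  have sv : Summable (fun r : ℕ => |a r/gamRec μ r|) := by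
    have := A_w hμ hA hC (fun _ => (1:ℝ)) hb1
    simpa using this
  have sα2v : Summable (fun r : ℕ => |((r:ℝ)+2*μ*theta r)^2 * (a r/gamRec μ r)|) :=
    A_w hμ hA hC _ hbα2
  have sθv : Summable (fun r : ℕ => |theta r * (a r/gamRec μ r)|) := A_w hμ hA hC _ hbθ
  have sαv : Summable (fun r : ℕ => |((r:ℝ)+2*μ*theta r) * (a r/gamRec μ r)|) :=
    A_w hμ hA hC _ hbα
  have sθαv : Summable (fun r : ℕ => |theta r * (((r:ℝ)+2*μ*theta r) * (a r/gamRec μ r))|) :=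
    (A_w hμ hA hC _ hbθα).congr fun r => by rw [mul_assoc]
  -- the ten Cauchy pieces
  have C1 := cauchy_piece (fun j => ((j:ℝ)+2*μ*theta j)^2 * (((n:ℝ)*x)^j/gamRec μ j))
    (fun r => a r/gamRec μ r) sα2u sv
  have C2 := cauchy_piece (fun j => ((n:ℝ)*x)^j/gamRec μ j)
    (fun r => ((r:ℝ)+2*μ*theta r)^2 * (a r/gamRec μ r)) su sα2v
  have C3 := cauchy_piece (fun j => (16*μ^2) * (theta j * (((n:ℝ)*x)^j/gamRec μ j)))
    (fun r => theta r * (a r/gamRec μ r)) (habs_mul _ _ sθu) sθv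
  have C4 := cauchy_piece (fun j => 2 * (((j:ℝ)+2*μ*theta j) * (((n:ℝ)*x)^j/gamRec μ j)))
    (fun r => ((r:ℝ)+2*μ*theta r) * (a r/gamRec μ r)) (habs_mul _ _ sαu) sαv
  have C5 := cauchy_piece
    (fun j => (-8*μ) * (theta j * (((j:ℝ)+2*μ*theta j) * (((n:ℝ)*x)^j/gamRec μ j))))
    (fun r => theta r * (a r/gamRec μ r)) (habs_mul _ _ sθαu) sθv
  have C6 := cauchy_piece (fun j => (-8*μ) * (theta j * (((n:ℝ)*x)^j/gamRec μ j)))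
    (fun r => theta r * (((r:ℝ)+2*μ*theta r) * (a r/gamRec μ r))) (habs_mul _ _ sθu) sθαv
  have C7 := cauchy_piece (fun j => (2*lam+3) * (((j:ℝ)+2*μ*theta j) * (((n:ℝ)*x)^j/gamRec μ j)))
    (fun r => a r/gamRec μ r) (habs_mul _ _ sαu) sv
  have C8 := cauchy_piece (fun j => (2*lam+3) * (((n:ℝ)*x)^j/gamRec μ j))
    (fun r => ((r:ℝ)+2*μ*theta r) * (a r/gamRec μ r)) (habs_mul _ _ su) sαv
  have C9 := cauchy_piece (fun j => (-4*μ*(2*lam+3)) * (theta j * (((n:ℝ)*x)^j/gamRec μ j)))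
    (fun r => theta r * (a r/gamRec μ r)) (habs_mul _ _ sθu) sθv
  have C10 := cauchy_piece (fun j => (lam+1)*(lam+2) * (((n:ℝ)*x)^j/gamRec μ j))
    (fun r => a r/gamRec μ r) (habs_mul _ _ su) sv
  -- per-term simplification of the operator
  have hterm : ∀ k : ℕ,
      pk μ a k ((n:ℝ)*x) / gamRec μ k *
        ((n:ℝ) ^ ((k:ℝ) + 2*μ*theta k + lam + 1) /
          Real.Gamma ((k:ℝ) + 2*μ*theta k + lam + 1)) *
        (∫ t in Set.Ioi (0:ℝ), Real.exp (-(n:ℝ) * t) * t ^ ((k:ℝ) + 2*μ*theta k + lam) * t ^ (2:ℕ)) =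
      (pk μ a k ((n:ℝ)*x) / gamRec μ k *
        (((k:ℝ) + 2*μ*theta k + lam + 1) * ((k:ℝ) + 2*μ*theta k + lam + 2))) *
        (((n:ℝ)^(2:ℕ))⁻¹) := by
    intro k
    have hθk := theta_nonneg k
    have hkc : (0:ℝ) ≤ (k:ℝ) := Nat.cast_nonneg k
    have hc : (0:ℝ) ≤ (k:ℝ) + 2*μ*theta k + lam := by
      have : (0:ℝ) ≤ 2*μ*theta k := by positivity
      linarith
    rw [gamma_integral hc hn, mul_assoc, coef_alg hc hn]
    ring
  -- splitting each term into ten Cauchy pieces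
  have hsplitk : ∀ k : ℕ,
      pk μ a k ((n:ℝ)*x) / gamRec μ k *
          (((k:ℝ) + 2*μ*theta k + lam + 1) * ((k:ℝ) + 2*μ*theta k + lam + 2)) =
        ∑ j ∈ Finset.range (k+1), NP μ lam ((n:ℝ)*x) a j (k-j) := by
    intro k
    rw [qk_eq hμ a ((n:ℝ)*x) k, Finset.sum_mul]
    refine Finset.sum_congr rfl fun j hj => ?_
    have hjk : j ≤ k := Nat.lt_succ_iff.mp (Finset.mem_range.mp hj)
    obtain ⟨r, rfl⟩ : ∃ r, k = j + r := ⟨k - j, by omega⟩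
    simp only [Nat.add_sub_cancel_left]
    linear_combination piece_identity' μ lam ((n:ℝ)*x) a j r
  -- the main tsum computation
  have hT : (∑' k : ℕ, pk μ a k ((n:ℝ)*x) / gamRec μ k *
      (((k:ℝ) + 2*μ*theta k + lam + 1) * ((k:ℝ) + 2*μ*theta k + lam + 2))) =
      (∑' j : ℕ, ((j:ℝ)+2*μ*theta j)^2 * (((n:ℝ)*x)^j/gamRec μ j)) * (∑' r : ℕ, a r/gamRec μ r) +
      ((∑' j : ℕ, ((n:ℝ)*x)^j/gamRec μ j) *
        (∑' r : ℕ, ((r:ℝ)+2*μ*theta r)^2 * (a r/gamRec μ r)) +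
      ((∑' j : ℕ, (16*μ^2) * (theta j * (((n:ℝ)*x)^j/gamRec μ j))) *
        (∑' r : ℕ, theta r * (a r/gamRec μ r)) +
      ((∑' j : ℕ, 2 * (((j:ℝ)+2*μ*theta j) * (((n:ℝ)*x)^j/gamRec μ j))) *
        (∑' r : ℕ, ((r:ℝ)+2*μ*theta r) * (a r/gamRec μ r)) +
      ((∑' j : ℕ, (-8*μ) * (theta j * (((j:ℝ)+2*μ*theta j) * (((n:ℝ)*x)^j/gamRec μ j)))) *
        (∑' r : ℕ, theta r * (a r/gamRec μ r)) +
      ((∑' j : ℕ, (-8*μ) * (theta j * (((n:ℝ)*x)^j/gamRec μ j))) *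
        (∑' r : ℕ, theta r * (((r:ℝ)+2*μ*theta r) * (a r/gamRec μ r))) +
      ((∑' j : ℕ, (2*lam+3) * (((j:ℝ)+2*μ*theta j) * (((n:ℝ)*x)^j/gamRec μ j))) *
        (∑' r : ℕ, a r/gamRec μ r) +
      ((∑' j : ℕ, (2*lam+3) * (((n:ℝ)*x)^j/gamRec μ j)) *
        (∑' r : ℕ, ((r:ℝ)+2*μ*theta r) * (a r/gamRec μ r)) +
      ((∑' j : ℕ, (-4*μ*(2*lam+3)) * (theta j * (((n:ℝ)*x)^j/gamRec μ j))) *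
        (∑' r : ℕ, theta r * (a r/gamRec μ r)) +
      (∑' j : ℕ, (lam+1)*(lam+2) * (((n:ℝ)*x)^j/gamRec μ j)) *
        (∑' r : ℕ, a r/gamRec μ r))))))))) := by
    rw [tsum_congr hsplitk]
    have hNPexp : ∀ k : ℕ, (∑ j ∈ Finset.range (k+1), NP μ lam ((n:ℝ)*x) a j (k-j)) =
        (∑ j ∈ Finset.range (k+1),
          (((j:ℝ)+2*μ*theta j)^2 * (((n:ℝ)*x)^j/gamRec μ j)) * (a (k-j) / gamRec μ (k-j))) +
        ((∑ j ∈ Finset.range (k+1),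
          (((n:ℝ)*x)^j/gamRec μ j) * ((((k-j:ℕ):ℝ)+2*μ*theta (k-j))^2 * (a (k-j) / gamRec μ (k-j)))) +
        ((∑ j ∈ Finset.range (k+1),
          ((16*μ^2) * (theta j * (((n:ℝ)*x)^j/gamRec μ j))) * (theta (k-j) * (a (k-j) / gamRec μ (k-j)))) +
        ((∑ j ∈ Finset.range (k+1),
          (2 * (((j:ℝ)+2*μ*theta j) * (((n:ℝ)*x)^j/gamRec μ j))) * ((((k-j:ℕ):ℝ)+2*μ*theta (k-j)) * (a (k-j) / gamRec μ (k-j)))) +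
        ((∑ j ∈ Finset.range (k+1),
          ((-8*μ) * (theta j * (((j:ℝ)+2*μ*theta j) * (((n:ℝ)*x)^j/gamRec μ j)))) * (theta (k-j) * (a (k-j) / gamRec μ (k-j)))) +
        ((∑ j ∈ Finset.range (k+1),
          ((-8*μ) * (theta j * (((n:ℝ)*x)^j/gamRec μ j))) * (theta (k-j) * ((((k-j:ℕ):ℝ)+2*μ*theta (k-j)) * (a (k-j) / gamRec μ (k-j))))) +
        ((∑ j ∈ Finset.range (k+1),
          ((2*lam+3) * (((j:ℝ)+2*μ*theta j) * (((n:ℝ)*x)^j/gamRec μ j))) * (a (k-j) / gamRec μ (k-j))) +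
        ((∑ j ∈ Finset.range (k+1),
          ((2*lam+3) * (((n:ℝ)*x)^j/gamRec μ j)) * ((((k-j:ℕ):ℝ)+2*μ*theta (k-j)) * (a (k-j) / gamRec μ (k-j)))) +
        ((∑ j ∈ Finset.range (k+1),
          ((-4*μ*(2*lam+3)) * (theta j * (((n:ℝ)*x)^j/gamRec μ j))) * (theta (k-j) * (a (k-j) / gamRec μ (k-j)))) +
        (∑ j ∈ Finset.range (k+1),
          ((lam+1)*(lam+2) * (((n:ℝ)*x)^j/gamRec μ j)) * (a (k-j) / gamRec μ (k-j))))))))))) := by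
      intro k
      simp only [NP, Finset.sum_add_distrib]
    rw [tsum_congr hNPexp]
    rw [Summable.tsum_add C1.1 (C2.1.add (C3.1.add (C4.1.add (C5.1.add (C6.1.add (C7.1.add
        (C8.1.add (C9.1.add C10.1)))))))),
      Summable.tsum_add C2.1 (C3.1.add (C4.1.add (C5.1.add (C6.1.add (C7.1.add
        (C8.1.add (C9.1.add C10.1))))))),
      Summable.tsum_add C3.1 (C4.1.add (C5.1.add (C6.1.add (C7.1.add (C8.1.add (C9.1.add C10.1)))))),
      Summable.tsum_add C4.1 (C5.1.add (C6.1.add (C7.1.add (C8.1.add (C9.1.add C10.1))))),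
      Summable.tsum_add C5.1 (C6.1.add (C7.1.add (C8.1.add (C9.1.add C10.1)))),
      Summable.tsum_add C6.1 (C7.1.add (C8.1.add (C9.1.add C10.1))),
      Summable.tsum_add C7.1 (C8.1.add (C9.1.add C10.1)),
      Summable.tsum_add C8.1 (C9.1.add C10.1),
      Summable.tsum_add C9.1 C10.1,
      C1.2, C2.2, C3.2, C4.2, C5.2, C6.2, C7.2, C8.2, C9.2, C10.2]
  -- finish
  have hE : emu μ ((n:ℝ) * x) ≠ 0 := (emu_pos hμ hy).ne'
  simp only [Dop]
  rw [tsum_congr hterm, tsum_mul_right, hT]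
  simp only [tsum_mul_left]
  rw [he1, he3, he4, he5, he6, ha1', ha3', ha4', ha5', ha6']
  have hnne : (n:ℝ) ≠ 0 := hn0.ne'
  field_simp
  ring
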